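/- Conversely, if the completely positive self-adjoint map F_γ ∘ G_γ : M_k → M_k leaves WM_kW invariant for an orthogonal projection W (i.e., Im(F_γ(G_γ(W))) ⊆ Im(W)), then taking V to be the orthogonal projection onto Im(G_γ(W)), one has tr(γ(W ⊗ V^⊥)) = tr(γ(W^⊥ ⊗ V)) = 0. -/

import Mathlib

open Matrix ComplexOrder Kronecker

noncomputable def Gmap {k m : ℕ} (γ : Matrix (Fin k × Fin m) (Fin k × Fin m) ℂ)
    (X : Matrix (Fin k) (Fin k) ℂ) : Matrix (Fin m) (Fin m) ℂ :=
  Matrix.of fun p q => ∑ i, ∑ j, γ (i, p) (j, q) * X j i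

noncomputable def Fmap {k m : ℕ} (γ : Matrix (Fin k × Fin m) (Fin k × Fin m) ℂ)
    (Y : Matrix (Fin m) (Fin m) ℂ) : Matrix (Fin k) (Fin k) ℂ :=
  Matrix.of fun i j => ∑ p, ∑ q, γ (i, p) (j, q) * Y q p

lemma trace_G {k m : ℕ} (γ : Matrix (Fin k × Fin m) (Fin k × Fin m) ℂ)
    (X : Matrix (Fin k) (Fin k) ℂ) (Y : Matrix (Fin m) (Fin m) ℂ) :
    (γ * (X ⊗ₖ Y)).trace = (Gmap γ X * Y).trace := by
  simp only [trace, Matrix.mul_apply, Gmap, kroneckerMap_apply, diag_apply, of_apply,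
    Fintype.sum_prod_type, Finset.sum_mul]
  rw [show (∑ i : Fin k, ∑ p : Fin m, ∑ j : Fin k, ∑ q : Fin m, γ (i, p) (j, q) * (X j i * Y q p))
      = ∑ p : Fin m, ∑ i : Fin k, ∑ j : Fin k, ∑ q : Fin m, γ (i, p) (j, q) * (X j i * Y q p)
      from Finset.sum_comm]
  refine Finset.sum_congr rfl fun p _ => ?_
  rw [show (∑ i : Fin k, ∑ j : Fin k, ∑ q : Fin m, γ (i, p) (j, q) * (X j i * Y q p))
      = ∑ q : Fin m, ∑ i : Fin k, ∑ j : Fin k, γ (i, p) (j, q) * (X j i * Y q p)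
      from (Finset.sum_congr rfl fun i _ => Finset.sum_comm).trans Finset.sum_comm]
  refine Finset.sum_congr rfl fun q _ => Finset.sum_congr rfl fun i _ =>
    Finset.sum_congr rfl fun j _ => by ring

lemma trace_F {k m : ℕ} (γ : Matrix (Fin k × Fin m) (Fin k × Fin m) ℂ)
    (X : Matrix (Fin k) (Fin k) ℂ) (Y : Matrix (Fin m) (Fin m) ℂ) :
    (γ * (X ⊗ₖ Y)).trace = (Fmap γ Y * X).trace := by
  simp only [trace, Matrix.mul_apply, Fmap, kroneckerMap_apply, diag_apply, of_apply,
    Fintype.sum_prod_type, Finset.sum_mul]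
  refine Finset.sum_congr rfl fun i _ => Finset.sum_comm.trans ?_
  refine Finset.sum_congr rfl fun j _ => Finset.sum_congr rfl fun p _ =>
    Finset.sum_congr rfl fun q _ => by ring

/-- If `P * P = P` and range of `A` is contained in range of `P`, then `P * A = A`. -/
lemma proj_absorb {n : Type*} [Fintype n] [DecidableEq n] {P A : Matrix n n ℂ} (hP : P * P = P)
    (h : LinearMap.range A.mulVecLin ≤ LinearMap.range P.mulVecLin) : P * A = A := by
  ext i j
  obtain ⟨y, hy⟩ := h ⟨Pi.single j 1, rfl⟩
  simp only [mulVecLin_apply] at hy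
  have h1 : (P * A).mulVec (Pi.single j 1) = A.mulVec (Pi.single j 1) := by
    rw [← Matrix.mulVec_mulVec, ← hy, Matrix.mulVec_mulVec, hP]
  have := congrFun h1 i
  simpa using this

/-- trace of `Nᴴ * N` is a nonneg real. -/
lemma trace_conj_self {a b : Type*} [Fintype a] [Fintype b] (N : Matrix a b ℂ) :
    (Nᴴ * N).trace = ((∑ j, ∑ i, Complex.normSq (N i j) : ℝ) : ℂ) := by
  simp only [trace, Matrix.mul_apply, diag_apply, conjTranspose_apply]
  push_cast
  refine Finset.sum_congr rfl fun j _ => Finset.sum_congr rfl fun i _ => ?_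
  rw [Complex.normSq_eq_conj_mul_self]
  simp [RCLike.star_def]

lemma trace_conj_self_nonneg {a b : Type*} [Fintype a] [Fintype b] (N : Matrix a b ℂ) :
    0 ≤ (Nᴴ * N).trace := by
  rw [trace_conj_self, Complex.le_def]
  constructor
  · simp only [Complex.zero_re, Complex.ofReal_re]
    exact Finset.sum_nonneg fun j _ => Finset.sum_nonneg fun i _ => Complex.normSq_nonneg _
  · simp

lemma eq_zero_of_trace_conj_self {a b : Type*} [Fintype a] [Fintype b] (N : Matrix a b ℂ)
    (h : (Nᴴ * N).trace = 0) : N = 0 := by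
  rw [trace_conj_self] at h
  have h0 : (∑ j, ∑ i, Complex.normSq (N i j) : ℝ) = 0 := by exact_mod_cast h
  have h1 := (Finset.sum_eq_zero_iff_of_nonneg (fun j _ =>
    Finset.sum_nonneg fun i _ => Complex.normSq_nonneg (N i j))).mp h0
  ext i j
  have h2 := (Finset.sum_eq_zero_iff_of_nonneg
    (fun i _ => Complex.normSq_nonneg (N i j))).mp (h1 j (Finset.mem_univ j)) i (Finset.mem_univ i)
  simpa using Complex.normSq_eq_zero.mp h2

open scoped MatrixOrder in
/-- square root of a PSD matrix (replacement for the removed `Matrix.PosSemidef.sqrt`) -/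
noncomputable def Matrix.PosSemidef.sqrt {n : Type*} [Fintype n] [DecidableEq n]
    {A : Matrix n n ℂ} (_hA : A.PosSemidef) : Matrix n n ℂ := CFC.sqrt A

open scoped MatrixOrder in
lemma Matrix.PosSemidef.posSemidef_sqrt {n : Type*} [Fintype n] [DecidableEq n]
    {A : Matrix n n ℂ} (hA : A.PosSemidef) : hA.sqrt.PosSemidef :=
  (CFC.sqrt_nonneg A).posSemidef

open scoped MatrixOrder in
lemma Matrix.PosSemidef.sqrt_mul_self {n : Type*} [Fintype n] [DecidableEq n]
    {A : Matrix n n ℂ} (hA : A.PosSemidef) : hA.sqrt * hA.sqrt = A :=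
  CFC.sqrt_mul_sqrt_self A hA.nonneg

/-- key trace rewrite for products of PSD matrices -/
lemma psd_trace_rewrite {n : Type*} [Fintype n] [DecidableEq n] {A B : Matrix n n ℂ}
    (hA : A.PosSemidef) (hB : B.PosSemidef) :
    (A * B).trace = ((hA.sqrt * hB.sqrt)ᴴ * (hA.sqrt * hB.sqrt)).trace := by
  symm
  rw [conjTranspose_mul, hA.posSemidef_sqrt.1, hB.posSemidef_sqrt.1]
  rw [show hB.sqrt * hA.sqrt * (hA.sqrt * hB.sqrt)
      = hB.sqrt * (hA.sqrt * hA.sqrt * hB.sqrt) from by noncomm_ring,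
    Matrix.trace_mul_comm, Matrix.mul_assoc, hB.sqrt_mul_self, hA.sqrt_mul_self]

lemma psd_mul_trace_nonneg {n : Type*} [Fintype n] [DecidableEq n] {A B : Matrix n n ℂ}
    (hA : A.PosSemidef) (hB : B.PosSemidef) : 0 ≤ (A * B).trace := by
  rw [psd_trace_rewrite hA hB]; exact trace_conj_self_nonneg _

lemma psd_mul_eq_zero_of_trace {n : Type*} [Fintype n] [DecidableEq n] {A B : Matrix n n ℂ}
    (hA : A.PosSemidef) (hB : B.PosSemidef) (h : (A * B).trace = 0) : A * B = 0 := by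
  rw [psd_trace_rewrite hA hB] at h
  have hz := eq_zero_of_trace_conj_self _ h
  have he : hA.sqrt * (hA.sqrt * hB.sqrt) * hB.sqrt = A * B := by
    rw [show hA.sqrt * (hA.sqrt * hB.sqrt) * hB.sqrt
        = (hA.sqrt * hA.sqrt) * (hB.sqrt * hB.sqrt) from by noncomm_ring,
      hA.sqrt_mul_self, hB.sqrt_mul_self]
  rw [← he, hz, Matrix.mul_zero, Matrix.zero_mul]

/-- conjTranspose of kronecker product -/
lemma kron_conjTranspose {a b : Type*} (A : Matrix a a ℂ) (B : Matrix b b ℂ) :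
    (A ⊗ₖ B)ᴴ = Aᴴ ⊗ₖ Bᴴ := by
  ext p q
  simp [conjTranspose_apply, kroneckerMap_apply, mul_comm]

lemma kron_posSemidef {a b : Type*} [Fintype a] [Fintype b] [DecidableEq a] [DecidableEq b]
    {A : Matrix a a ℂ} {B : Matrix b b ℂ}
    (hA : A.PosSemidef) (hB : B.PosSemidef) : (A ⊗ₖ B).PosSemidef := by
  have : A ⊗ₖ B = (hA.sqrt ⊗ₖ hB.sqrt)ᴴ * (hA.sqrt ⊗ₖ hB.sqrt) := by
    rw [kron_conjTranspose, hA.posSemidef_sqrt.1, hB.posSemidef_sqrt.1,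
      ← Matrix.mul_kronecker_mul, hA.sqrt_mul_self, hB.sqrt_mul_self]
  rw [this]
  exact Matrix.posSemidef_conjTranspose_mul_self _

/-- hermitian projections are PSD -/
lemma proj_posSemidef {n : Type*} [Fintype n] {P : Matrix n n ℂ} (h1 : P.IsHermitian)
    (h2 : P * P = P) : P.PosSemidef := by
  have : P = Pᴴ * P := by rw [h1, h2]
  rw [this]; exact Matrix.posSemidef_conjTranspose_mul_self _

lemma Gmap_isHermitian {k m : ℕ} {γ : Matrix (Fin k × Fin m) (Fin k × Fin m) ℂ}
    {W : Matrix (Fin k) (Fin k) ℂ} (hγ : γ.IsHermitian) (hW : W.IsHermitian) :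
    (Gmap γ W).IsHermitian := by
  ext p q
  simp only [conjTranspose_apply, Gmap, of_apply, star_sum, star_mul', RCLike.star_def]
  rw [Finset.sum_comm]
  refine Finset.sum_congr rfl fun i _ => Finset.sum_congr rfl fun j _ => ?_
  have h1 : (starRingEnd ℂ) (γ (j, q) (i, p)) = γ (i, p) (j, q) := by
    have := congrFun (congrFun hγ (i, p)) (j, q)
    simpa [conjTranspose_apply] using this
  have h2 : (starRingEnd ℂ) (W i j) = W j i := by
    have := congrFun (congrFun hW j) i
    simpa [conjTranspose_apply] using this
  rw [h1, h2]

lemma Gmap_posSemidef {k m : ℕ} {γ : Matrix (Fin k × Fin m) (Fin k × Fin m) ℂ}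
    {W : Matrix (Fin k) (Fin k) ℂ} (hγ : γ.PosSemidef) (hW : W.PosSemidef) :
    (Gmap γ W).PosSemidef := by
  refine .of_dotProduct_mulVec_nonneg (Gmap_isHermitian hγ.1 hW.1) fun y => ?_
  have hY : (vecMulVec y (star y)).PosSemidef := by
    have : vecMulVec y (star y) = (Matrix.replicateRow Unit (star y))ᴴ * (Matrix.replicateRow Unit (star y)) := by
      ext p q
      simp [vecMulVec_apply, Matrix.mul_apply, Matrix.replicateRow_apply, conjTranspose_apply]
    rw [this]; exact Matrix.posSemidef_conjTranspose_mul_self _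
  have key : star y ⬝ᵥ (Gmap γ W) *ᵥ y = (γ * (W ⊗ₖ vecMulVec y (star y))).trace := by
    rw [trace_G]
    simp only [trace, Matrix.mul_apply, diag_apply, dotProduct, mulVec, vecMulVec_apply,
      Pi.star_apply]
    refine Finset.sum_congr rfl fun p _ => ?_
    simp only [Finset.mul_sum]
    refine Finset.sum_congr rfl fun q _ => by ring
  rw [key]
  exact psd_mul_trace_nonneg hγ (kron_posSemidef hW hY)

/-- range inclusion gives factorization -/
lemma factor_of_range_le {n : Type*} [Fintype n] [DecidableEq n] {A B : Matrix n n ℂ}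
    (h : LinearMap.range A.mulVecLin ≤ LinearMap.range B.mulVecLin) :
    ∃ M : Matrix n n ℂ, A = B * M := by
  have hc : ∀ j, ∃ c, B.mulVec c = A.mulVec (Pi.single j 1) := fun j => h ⟨Pi.single j 1, rfl⟩
  refine ⟨Matrix.of fun q j => (hc j).choose q, ?_⟩
  ext i j
  have := congrFun ((hc j).choose_spec) i
  simp only [mulVec, dotProduct, Pi.single_apply, mul_ite, mul_one, mul_zero,
    Finset.sum_ite_eq', Finset.mem_univ, if_true] at this
  simp only [Matrix.mul_apply, of_apply]
  rw [← this]

/-- If `F_γ ∘ G_γ` leaves `W M_k W` invariant, i.e.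
`Im(F_γ(G_γ(W))) ⊆ Im(W)`, and `V` is the orthogonal projection onto `Im(G_γ(W))`, then
`tr(γ(W ⊗ V^⊥)) = tr(γ(W^⊥ ⊗ V)) = 0`. -/
theorem stmt8 (k m : ℕ) (γ : Matrix (Fin k × Fin m) (Fin k × Fin m) ℂ)
    (W : Matrix (Fin k) (Fin k) ℂ) (V : Matrix (Fin m) (Fin m) ℂ)
    (hγ : γ.PosSemidef)
    (hWherm : W.IsHermitian) (hWproj : W * W = W)
    (hinv : LinearMap.range (Fmap γ (Gmap γ W)).mulVecLin ≤ LinearMap.range W.mulVecLin)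
    (hVherm : V.IsHermitian) (hVproj : V * V = V)
    (hVrange : LinearMap.range V.mulVecLin = LinearMap.range (Gmap γ W).mulVecLin) :
    (γ * (W ⊗ₖ (1 - V))).trace = 0 ∧ (γ * ((1 - W) ⊗ₖ V)).trace = 0 := by
  set G := Gmap γ W with hG
  have hGherm : G.IsHermitian := Gmap_isHermitian hγ.1 hWherm
  have hVG : V * G = G := proj_absorb hVproj (le_of_eq hVrange.symm)
  have hGV : G * V = G := by
    have : (V * G)ᴴ = G * V := by rw [conjTranspose_mul, hVherm, hGherm]
    rw [← this, hVG, hGherm]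
  constructor
  · rw [trace_G, Matrix.mul_sub, Matrix.mul_one, hGV, sub_self, trace_zero]
  · have hWF : W * Fmap γ G = Fmap γ G := proj_absorb hWproj hinv
    have htr0 : (γ * ((1 - W) ⊗ₖ G)).trace = 0 := by
      rw [trace_F, Matrix.mul_sub, Matrix.mul_one, Matrix.trace_sub,
        Matrix.trace_mul_comm, hWF, sub_self]
    have hWpsd : W.PosSemidef := proj_posSemidef hWherm hWproj
    have h1W : (1 - W) * (1 - W) = 1 - W := by
      simp only [Matrix.sub_mul, Matrix.mul_sub, Matrix.one_mul, Matrix.mul_one, hWproj]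
      abel
    have h1Wherm : (1 - W).IsHermitian := (Matrix.isHermitian_one).sub hWherm
    have hBpsd : ((1 - W) ⊗ₖ G).PosSemidef :=
      kron_posSemidef (proj_posSemidef h1Wherm h1W) (Gmap_posSemidef hγ hWpsd)
    have hzero : γ * ((1 - W) ⊗ₖ G) = 0 := psd_mul_eq_zero_of_trace hγ hBpsd htr0
    obtain ⟨M, hM⟩ := factor_of_range_le (le_of_eq hVrange)
    have hfac : (1 - W) ⊗ₖ V = ((1 - W) ⊗ₖ G) * ((1 : Matrix (Fin k) (Fin k) ℂ) ⊗ₖ M) := by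
      rw [← Matrix.mul_kronecker_mul, Matrix.mul_one, ← hM]
    rw [hfac, ← Matrix.mul_assoc, hzero, Matrix.zero_mul, trace_zero]
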